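/- Let S be a half-odd-integer and V_j = exp(-iπ S_j) for j = 1,2,3. Then V_j V_k = -V_k V_j whenever j ≠ k. -/

import Mathlib

open NormedSpace Matrix Nat

attribute [local instance] Matrix.linftyOpSemiNormedRing Matrix.linftyOpNormedRing
  Matrix.linftyOpNormedAlgebra

variable {n : ℕ}

private lemma exp_semiconj_left {X Y Z : Matrix (Fin n) (Fin n) ℂ} (h : X * Y = Z * X) :
    X * exp Y = exp Z * X := by
  have hpow : ∀ N : ℕ, X * Y ^ N = Z ^ N * X := by
    intro N
    induction N with
    | zero => simp
    | succ N ih =>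
        rw [pow_succ, ← mul_assoc, ih, mul_assoc, h, pow_succ, mul_assoc]
  simp only [exp_eq_tsum (𝕂 := ℂ)]
  have hs : Summable (fun N : ℕ => (N !⁻¹ : ℂ) • Y ^ N) := expSeries_summable' Y
  have hs' : Summable (fun N : ℕ => (N !⁻¹ : ℂ) • Z ^ N) := expSeries_summable' Z
  calc X * ∑' N : ℕ, (N !⁻¹ : ℂ) • Y ^ N
      = ∑' N : ℕ, X * ((N !⁻¹ : ℂ) • Y ^ N) :=
        (hs.tsum_mul_left X).symm
    _ = ∑' N : ℕ, ((N !⁻¹ : ℂ) • Z ^ N) * X := by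
        refine tsum_congr fun N => ?_
        rw [mul_smul_comm, smul_mul_assoc, hpow]
    _ = (∑' N : ℕ, (N !⁻¹ : ℂ) • Z ^ N) * X :=
        hs'.tsum_mul_right X

private lemma exp_semiconj_right {X Y Z : Matrix (Fin n) (Fin n) ℂ} (h : Y * X = X * Z) :
    exp Y * X = X * exp Z := by
  have hpow : ∀ N : ℕ, Y ^ N * X = X * Z ^ N := by
    intro N
    induction N with
    | zero => simp
    | succ N ih =>
        rw [pow_succ, pow_succ, mul_assoc, h, ← mul_assoc, ih, mul_assoc]
  simp only [exp_eq_tsum (𝕂 := ℂ)]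
  have hs : Summable (fun N : ℕ => (N !⁻¹ : ℂ) • Y ^ N) := expSeries_summable' Y
  have hs' : Summable (fun N : ℕ => (N !⁻¹ : ℂ) • Z ^ N) := expSeries_summable' Z
  calc (∑' N : ℕ, (N !⁻¹ : ℂ) • Y ^ N) * X
      = ∑' N : ℕ, ((N !⁻¹ : ℂ) • Y ^ N) * X :=
        (hs.tsum_mul_right X).symm
    _ = ∑' N : ℕ, X * ((N !⁻¹ : ℂ) • Z ^ N) := by
        refine tsum_congr fun N => ?_
        rw [smul_mul_assoc, mul_smul_comm, hpow]
    _ = X * ∑' N : ℕ, (N !⁻¹ : ℂ) • Z ^ N :=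
        hs'.tsum_mul_left X

private lemma exp_smul_one (c : ℂ) :
    exp (c • (1 : Matrix (Fin n) (Fin n) ℂ)) = Complex.exp c • 1 := by
  have h1 : c • (1 : Matrix (Fin n) (Fin n) ℂ) = algebraMap ℂ _ c :=
    (Algebra.algebraMap_eq_smul_one c).symm
  have h2 := algebraMap_exp_comm (𝕂 := ℂ) (𝔸 := Matrix (Fin n) (Fin n) ℂ) c
  rw [h1]
  refine Eq.trans (by exact h2.symm) ?_
  rw [Algebra.algebraMap_eq_smul_one, Complex.exp_eq_exp_ℂ]
private lemma expA_mul_anticomm {A B C : Matrix (Fin n) (Fin n) ℂ}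
    (h1 : A * B - B * A = Complex.I • C) (h3 : C * A - A * C = Complex.I • B)
    {c : ℂ} (hc : Complex.exp c = -1) :
    exp (c • A) * B = -(B * exp (c • A)) := by
  have hcn : Complex.exp (-c) = -1 := by
    rw [Complex.exp_neg, hc]; norm_num
  have hAB : A * B = B * A + Complex.I • C := by
    rw [← h1]; abel
  have hAC : A * C = C * A - Complex.I • B := by
    have := sub_eq_iff_eq_add.mp h3
    rw [this]; abel
  set L := B + Complex.I • C with hL
  set M := B - Complex.I • C with hM
  have hALL : A * L = L * A + L := by
    rw [hL, mul_add, add_mul, mul_smul_comm, smul_mul_assoc, hAB, hAC, smul_sub, smul_smul,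
      Complex.I_mul_I, neg_one_smul]
    abel
  have hAMM : A * M = M * A - M := by
    rw [hM, mul_sub, sub_mul, mul_smul_comm, smul_mul_assoc, hAB, hAC, smul_sub, smul_smul,
      Complex.I_mul_I, neg_one_smul]
    abel
  have hcomm : Commute (c • A) (c • (1 : Matrix (Fin n) (Fin n) ℂ)) :=
    ((Commute.one_right A).smul_right c).smul_left c
  have hcomm' : Commute (c • A) ((-c) • (1 : Matrix (Fin n) (Fin n) ℂ)) :=
    ((Commute.one_right A).smul_right (-c)).smul_left c
  have hE1 : exp (c • A) * L = -(L * exp (c • A)) := by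
    have hsc : (c • A) * L = L * (c • A + c • (1 : Matrix (Fin n) (Fin n) ℂ)) := by
      rw [smul_mul_assoc, hALL, mul_add, mul_smul_comm, mul_smul_comm, mul_one, smul_add]
    rw [exp_semiconj_right hsc, Matrix.exp_add_of_commute _ _ hcomm, exp_smul_one, hc,
      ← mul_assoc, mul_smul_comm, mul_one, neg_one_smul]
  have hE2 : exp (c • A) * M = -(M * exp (c • A)) := by
    have hsc : (c • A) * M = M * (c • A + (-c) • (1 : Matrix (Fin n) (Fin n) ℂ)) := by
      rw [smul_mul_assoc, hAMM, mul_add, mul_smul_comm, mul_smul_comm, mul_one, smul_sub,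
        neg_smul]
      abel
    rw [exp_semiconj_right hsc, Matrix.exp_add_of_commute _ _ hcomm', exp_smul_one, hcn,
      ← mul_assoc, mul_smul_comm, mul_one, neg_one_smul]
  have hsum : exp (c • A) * ((2 : ℂ) • B) = -(((2 : ℂ) • B) * exp (c • A)) := by
    have hLM : L + M = (2 : ℂ) • B := by
      rw [hL, hM, two_smul]; abel
    calc exp (c • A) * ((2 : ℂ) • B) = exp (c • A) * (L + M) := by rw [hLM]
      _ = exp (c • A) * L + exp (c • A) * M := by rw [mul_add]
      _ = -(L * exp (c • A)) + -(M * exp (c • A)) := by rw [hE1, hE2]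
      _ = -((L + M) * exp (c • A)) := by rw [← neg_add, ← add_mul]
      _ = -(((2 : ℂ) • B) * exp (c • A)) := by rw [hLM]
  have h2 : (2 : ℂ) • (exp (c • A) * B) = (2 : ℂ) • (-(B * exp (c • A))) := by
    rw [← mul_smul_comm, hsum, smul_neg, smul_mul_assoc]
  exact smul_right_injective _ (two_ne_zero) h2
private lemma star_dot_self_nonneg (u : Fin n → ℂ) :
    ∃ r : ℝ, 0 ≤ r ∧ dotProduct (star u) u = (r : ℂ) ∧ (u ≠ 0 → 0 < r) := by
  refine ⟨∑ i, Complex.normSq (u i), Finset.sum_nonneg fun i _ => Complex.normSq_nonneg _, ?_, ?_⟩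
  · rw [dotProduct]
    push_cast
    refine Finset.sum_congr rfl fun i _ => ?_
    rw [Pi.star_apply, Complex.star_def]
    exact Complex.normSq_eq_conj_mul_self.symm
  · intro hu
    obtain ⟨i, hi⟩ := Function.ne_iff.mp hu
    exact Finset.sum_pos' (fun j _ => Complex.normSq_nonneg _)
      ⟨i, Finset.mem_univ i, Complex.normSq_pos.mpr hi⟩

private lemma dot_conjmul_nonneg (N : Matrix (Fin n) (Fin n) ℂ) (w : Fin n → ℂ) :
    ∃ b : ℝ, 0 ≤ b ∧ dotProduct (star w) ((Nᴴ * N) *ᵥ w) = (b : ℂ) := by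
  obtain ⟨b, hb0, hbu, _⟩ := star_dot_self_nonneg (N *ᵥ w)
  refine ⟨b, hb0, ?_⟩
  rw [← hbu, Matrix.star_mulVec, ← Matrix.mulVec_mulVec, dotProduct_mulVec]
private lemma exp_two_pi_smul_eq_neg_one {k : ℕ} {A B C : Matrix (Fin (2*k+2)) (Fin (2*k+2)) ℂ}
    (hA : A.IsHermitian) (hB : B.IsHermitian) (hC : C.IsHermitian)
    (h1 : A * B - B * A = Complex.I • C)
    (h2 : B * C - C * B = Complex.I • A)
    (h3 : C * A - A * C = Complex.I • B)
    (hcas : A ^ 2 + B ^ 2 + C ^ 2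
      = (((2*(k:ℂ)+1)/2) * ((2*(k:ℂ)+1)/2 + 1)) • (1 : Matrix (Fin (2*k+2)) (Fin (2*k+2)) ℂ)) :
    exp ((2 * (Real.pi : ℂ) * Complex.I) • A) = -1 := by
  classical
  set s : ℝ := (2*(k:ℝ)+1)/2 with hs
  have hs0 : 0 ≤ s := by rw [hs]; positivity
  set σ : ℝ := s * (s + 1) with hσ
  have hcas' : A ^ 2 + B ^ 2 + C ^ 2
      = ((σ:ℂ)) • (1 : Matrix (Fin (2*k+2)) (Fin (2*k+2)) ℂ) := by
    rw [hcas]; congr 1; rw [hσ, hs]; push_cast; ring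
  have hBC : B ^ 2 + C ^ 2 = (σ:ℂ) • 1 - A ^ 2 := by rw [← hcas']; abel
  set L : Matrix (Fin (2*k+2)) (Fin (2*k+2)) ℂ := B + Complex.I • C with hLdef
  have hLadj : Lᴴ = B - Complex.I • C := by
    rw [hLdef, Matrix.conjTranspose_add, Matrix.conjTranspose_smul, hB.eq, hC.eq,
      Complex.star_def, Complex.conj_I, neg_smul, sub_eq_add_neg]
  have e2 : B * C = Complex.I • A + C * B := sub_eq_iff_eq_add.mp h2
  have hLL : Lᴴ * L = (σ:ℂ) • 1 - A ^ 2 - A := by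
    calc Lᴴ * L = B ^ 2 + C ^ 2 + (Complex.I • (B * C) - Complex.I • (C * B)) := by
          rw [hLadj, hLdef]
          simp only [mul_add, add_mul, mul_sub, sub_mul, mul_smul_comm, smul_mul_assoc,
            smul_add, smul_sub, smul_smul, Complex.I_mul_I, neg_one_smul, neg_smul, smul_neg,
            neg_mul, mul_neg, neg_neg, one_smul, mul_one, one_mul, pow_two]
          abel
      _ = B ^ 2 + C ^ 2 - A := by
          rw [e2, smul_add, smul_smul, Complex.I_mul_I, neg_one_smul]
          abel
      _ = (σ:ℂ) • 1 - A ^ 2 - A := by rw [hBC]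
  have hLL' : L * Lᴴ = (σ:ℂ) • 1 - A ^ 2 + A := by
    calc L * Lᴴ = B ^ 2 + C ^ 2 - (Complex.I • (B * C) - Complex.I • (C * B)) := by
          rw [hLadj, hLdef]
          simp only [mul_add, add_mul, mul_sub, sub_mul, mul_smul_comm, smul_mul_assoc,
            smul_add, smul_sub, smul_smul, Complex.I_mul_I, neg_one_smul, neg_smul, smul_neg,
            neg_mul, mul_neg, neg_neg, one_smul, mul_one, one_mul, pow_two]
          abel
      _ = B ^ 2 + C ^ 2 + A := by
          rw [e2, smul_add, smul_smul, Complex.I_mul_I, neg_one_smul]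
          abel
      _ = (σ:ℂ) • 1 - A ^ 2 + A := by rw [hBC]
  -- the positivity bounds on eigenvalues
  have hbound : ∀ (μ : ℝ) (w : Fin (2*k+2) → ℂ), w ≠ 0 → A *ᵥ w = (μ:ℂ) • w →
      μ^2 + μ ≤ σ ∧ μ^2 - μ ≤ σ := by
    intro μ w hw hev
    obtain ⟨r, hr0, hru, hrpos⟩ := star_dot_self_nonneg w
    have hr : 0 < r := hrpos hw
    have hA2 : A ^ 2 *ᵥ w = ((μ:ℂ)^2) • w := by
      rw [pow_two, ← Matrix.mulVec_mulVec, hev, Matrix.mulVec_smul, hev, smul_smul, ← pow_two]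
    have heval : ∀ t : ℝ, (((σ:ℂ)) • 1 - A ^ 2 + (t:ℂ) • A) *ᵥ w
        = ((σ - μ^2 + t*μ : ℝ) : ℂ) • w := by
      intro t
      rw [Matrix.add_mulVec, Matrix.sub_mulVec, Matrix.smul_mulVec, Matrix.one_mulVec,
        hA2, Matrix.smul_mulVec, hev]
      push_cast
      module
    constructor
    · obtain ⟨b, hb0, hbu⟩ := dot_conjmul_nonneg L w
      rw [hLL] at hbu
      have hrw : ((σ:ℂ) • (1 : Matrix (Fin (2*k+2)) (Fin (2*k+2)) ℂ) - A ^ 2 - A)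
          = ((σ:ℂ) • 1 - A ^ 2 + (((-1 : ℝ)):ℂ) • A) := by push_cast; module
      rw [hrw, heval, dotProduct_smul, hru, smul_eq_mul, ← Complex.ofReal_mul] at hbu
      have hreq : (σ - μ^2 + (-1)*μ) * r = b := by exact_mod_cast hbu
      nlinarith [hreq, hb0, hr]
    · obtain ⟨b, hb0, hbu⟩ := dot_conjmul_nonneg Lᴴ w
      rw [Matrix.conjTranspose_conjTranspose, hLL'] at hbu
      have hrw : ((σ:ℂ) • (1 : Matrix (Fin (2*k+2)) (Fin (2*k+2)) ℂ) - A ^ 2 + A)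
          = ((σ:ℂ) • 1 - A ^ 2 + (((1 : ℝ)):ℂ) • A) := by push_cast; module
      rw [hrw, heval, dotProduct_smul, hru, smul_eq_mul, ← Complex.ofReal_mul] at hbu
      have hreq : (σ - μ^2 + 1*μ) * r = b := by exact_mod_cast hbu
      nlinarith [hreq, hb0, hr]
  -- ladder operator raises eigenvalues by 1
  have hAL : A * L = L * A + L := by
    have hAB : A * B = B * A + Complex.I • C := by rw [← h1]; abel
    have hAC : A * C = C * A - Complex.I • B := by rw [sub_eq_iff_eq_add.mp h3]; abel
    rw [hLdef, mul_add, add_mul, mul_smul_comm, smul_mul_assoc, hAB, hAC, smul_sub, smul_smul,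
      Complex.I_mul_I, neg_one_smul]
    abel
  have hlad : ∀ (ν : ℂ) (u : Fin (2*k+2) → ℂ), A *ᵥ u = ν • u →
      A *ᵥ (L *ᵥ u) = (ν + 1) • (L *ᵥ u) := by
    intro ν u hu
    rw [Matrix.mulVec_mulVec, hAL, Matrix.add_mulVec, ← Matrix.mulVec_mulVec, hu,
      Matrix.mulVec_smul, add_smul, one_smul]
  have hLpow : ∀ (N : ℕ) (u : Fin (2*k+2) → ℂ), L ^ (N+1) *ᵥ u = L *ᵥ (L ^ N *ᵥ u) := by
    intro N u
    rw [Matrix.mulVec_mulVec, ← _root_.pow_succ']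
  -- classification of eigenvalues
  have heig : ∀ (μ : ℝ) (v : Fin (2*k+2) → ℂ), v ≠ 0 → A *ᵥ v = (μ:ℂ) • v →
      ∃ N : ℕ, μ = s - N := by
    intro μ v hv hev
    have hiter : ∀ N : ℕ, A *ᵥ (L ^ N *ᵥ v) = (((μ + N : ℝ)) : ℂ) • (L ^ N *ᵥ v) := by
      intro N
      induction N with
      | zero => simpa [Matrix.one_mulVec] using hev
      | succ N ih =>
          have hstep := hlad _ _ ih
          rw [hLpow]
          convert hstep using 2
          push_cast
          ring
    have hstep : ∀ N : ℕ, L ^ N *ᵥ v ≠ 0 → μ + N ≤ s := by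
      intro N hne
      obtain ⟨hb1, hb2⟩ := hbound (μ + N) _ hne (by exact_mod_cast hiter N)
      rw [hσ] at hb1 hb2
      nlinarith [hb1, hb2, hs0, sq_nonneg (μ + N - s), sq_nonneg (μ + N + s)]
    have hterm : ∃ N : ℕ, L ^ (N+1) *ᵥ v = 0 := by
      by_contra hcon
      push_neg at hcon
      have h1' := hstep (⌈s - μ⌉₊ + 1) (hcon ⌈s - μ⌉₊)
      have h2' := Nat.le_ceil (s - μ)
      push_cast at h1'
      linarith
    obtain ⟨N, hN, hNmin⟩ : ∃ N : ℕ, (L ^ (N+1) *ᵥ v = 0) ∧ ∀ M, M < N → L ^ (M+1) *ᵥ v ≠ 0 :=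
      ⟨Nat.find hterm, Nat.find_spec hterm, fun M hM => Nat.find_min hterm hM⟩
    have hNe : L ^ N *ᵥ v ≠ 0 := by
      rcases Nat.eq_zero_or_pos N with h0 | hpos
      · rw [h0, pow_zero, Matrix.one_mulVec]; exact hv
      · intro hz
        apply hNmin (N - 1) (by omega)
        have hN1 : N - 1 + 1 = N := by omega
        rw [hN1]
        exact hz
    set m : ℝ := μ + N with hm
    have hevw : A *ᵥ (L ^ N *ᵥ v) = ((m : ℝ):ℂ) • (L ^ N *ᵥ v) := hiter N
    have hLw : L *ᵥ (L ^ N *ᵥ v) = 0 := by rw [← hLpow]; exact hN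
    have hz : (((σ - m^2 - m : ℝ)) : ℂ) • (L ^ N *ᵥ v) = 0 := by
      have h0 : (Lᴴ * L) *ᵥ (L ^ N *ᵥ v) = 0 := by
        rw [← Matrix.mulVec_mulVec, hLw, Matrix.mulVec_zero]
      have hA2 : A ^ 2 *ᵥ (L ^ N *ᵥ v) = (((m:ℝ):ℂ)^2) • (L ^ N *ᵥ v) := by
        rw [pow_two, ← Matrix.mulVec_mulVec, hevw, Matrix.mulVec_smul, hevw, smul_smul, ← pow_two]
      have heq : ((σ:ℂ) • 1 - A ^ 2 - A) *ᵥ (L ^ N *ᵥ v)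
          = ((σ - m^2 - m : ℝ) : ℂ) • (L ^ N *ᵥ v) := by
        rw [Matrix.sub_mulVec, Matrix.sub_mulVec, Matrix.smul_mulVec, Matrix.one_mulVec,
          hA2, hevw]
        push_cast
        module
      rw [← heq, ← hLL]
      exact h0
    have hsm : σ = m^2 + m := by
      rcases smul_eq_zero.mp hz with hc0 | hw0
      · have : (σ - m^2 - m : ℝ) = 0 := by exact_mod_cast hc0
        linarith
      · exact absurd hw0 hNe
    obtain ⟨_, hb2⟩ := hbound m _ hNe hevw
    have hm0 : 0 ≤ m := by linarith
    have hfac : (m - s) * (m + s + 1) = 0 := by linear_combination hσ - hsm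
    have hms : m = s := by
      rcases mul_eq_zero.mp hfac with hcase | hcase
      · linarith
      · linarith
    exact ⟨N, by rw [hm] at hms; linarith⟩
  -- every eigenvalue of A is a half-integer
  have heval : ∀ i, ∃ N : ℕ, hA.eigenvalues i = s - N := by
    intro i
    have hvne : (⇑(hA.eigenvectorBasis i) : Fin (2*k+2) → ℂ) ≠ 0 := by
      intro h0
      have hb := hA.eigenvectorBasis.toBasis.ne_zero i
      apply hb
      rw [OrthonormalBasis.coe_toBasis]
      ext j
      exact congrFun h0 j
    refine heig _ _ hvne ?_
    have h := hA.mulVec_eigenvectorBasis i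
    rw [h]
    ext j
    simp [Complex.real_smul]
  -- assemble the exponential via the spectral theorem
  set V : Matrix (Fin (2*k+2)) (Fin (2*k+2)) ℂ := ↑(Matrix.IsHermitian.eigenvectorUnitary hA) with hV
  have hVs : star V * V = 1 := hA.eigenvectorUnitary.2.1
  have hVs' : V * star V = 1 := hA.eigenvectorUnitary.2.2
  have hVinv : V⁻¹ = star V := Matrix.inv_eq_left_inv hVs
  have hVu : IsUnit V := ⟨⟨V, star V, hVs', hVs⟩, rfl⟩
  set d : Fin (2*k+2) → ℂ := fun i => (2 * (Real.pi:ℂ) * Complex.I) * ((hA.eigenvalues i : ℝ) : ℂ)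
    with hd
  have hsmulA : (2 * (Real.pi : ℂ) * Complex.I) • A = V * Matrix.diagonal d * star V := by
    have hdd : Matrix.diagonal d = (2 * (Real.pi:ℂ) * Complex.I) •
        Matrix.diagonal ((RCLike.ofReal ∘ hA.eigenvalues) : Fin (2*k+2) → ℂ) := by
      rw [← Matrix.diagonal_smul]
      rfl
    conv_lhs => rw [hA.spectral_theorem, Unitary.conjStarAlgAut_apply]
    rw [hdd, mul_smul_comm, smul_mul_assoc]
  have hentry : (fun i => Complex.exp ((2 * (Real.pi:ℂ) * Complex.I) * ((hA.eigenvalues i : ℝ) : ℂ)))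
      = (fun _ : Fin (2*k+2) => (-1 : ℂ)) := by
    funext i
    obtain ⟨N, hN⟩ := heval i
    have harg : (2 * (Real.pi:ℂ) * Complex.I) * ((hA.eigenvalues i : ℝ) : ℂ)
        = ((2*k+1 : ℕ) : ℂ) * (Real.pi * Complex.I)
          + (-(N:ℂ)) * (2 * Real.pi * Complex.I) := by
      rw [hN, hs]; push_cast; ring
    have h2pi : Complex.exp ((-(N:ℂ)) * (2 * Real.pi * Complex.I)) = 1 := by
      have := Complex.exp_int_mul_two_pi_mul_I (-(N:ℤ))
      push_cast at this
      exact this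
    rw [harg, Complex.exp_add, h2pi, mul_one, Complex.exp_nat_mul, Complex.exp_pi_mul_I]
    exact Odd.neg_one_pow ⟨k, by ring⟩
  have hexpd : exp (Matrix.diagonal d) = Matrix.diagonal (fun _ => (-1 : ℂ)) := by
    rw [Matrix.exp_diagonal, Pi.exp_def]
    simp only [← Complex.exp_eq_exp_ℂ, hd]
    rw [hentry]
  have hdiagneg : Matrix.diagonal (fun _ => (-1:ℂ))
      = (-1 : Matrix (Fin (2*k+2)) (Fin (2*k+2)) ℂ) := by
    have : (fun _ : Fin (2*k+2) => (-1:ℂ)) = (fun _ => -(1:ℂ)) := rfl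
    rw [this, ← Matrix.diagonal_neg, Matrix.diagonal_one]
  calc exp ((2 * (Real.pi:ℂ) * Complex.I) • A)
      = exp (V * Matrix.diagonal d * V⁻¹) := by rw [hsmulA, hVinv]
    _ = V * exp (Matrix.diagonal d) * V⁻¹ := Matrix.exp_conj V _ hVu
    _ = -1 := by
        rw [hexpd, hdiagneg, hVinv, mul_neg_one, neg_mul, hVs']
private lemma key_anticommute {k : ℕ} {A B C : Matrix (Fin (2*k+2)) (Fin (2*k+2)) ℂ}
    (hA : A.IsHermitian) (hB : B.IsHermitian) (hC : C.IsHermitian)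
    (h1 : A * B - B * A = Complex.I • C)
    (h2 : B * C - C * B = Complex.I • A)
    (h3 : C * A - A * C = Complex.I • B)
    (hcas : A ^ 2 + B ^ 2 + C ^ 2
      = (((2*(k:ℂ)+1)/2) * ((2*(k:ℂ)+1)/2 + 1)) • (1 : Matrix (Fin (2*k+2)) (Fin (2*k+2)) ℂ)) :
    (exp ((-(Real.pi : ℂ) * Complex.I) • A)) * (exp ((-(Real.pi : ℂ) * Complex.I) • B)) =
      -((exp ((-(Real.pi : ℂ) * Complex.I) • B)) *
        (exp ((-(Real.pi : ℂ) * Complex.I) • A))) := by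
  set c : ℂ := -(Real.pi : ℂ) * Complex.I with hc
  have hcexp : Complex.exp c = -1 := by
    rw [hc, neg_mul, Complex.exp_neg, Complex.exp_pi_mul_I]
    norm_num
  have hanti : exp (c • A) * B = -(B * exp (c • A)) := expA_mul_anticomm h1 h3 hcexp
  have hsemi : exp (c • A) * (c • B) = ((-c) • B) * exp (c • A) := by
    rw [mul_smul_comm, hanti, smul_neg, ← neg_smul, smul_mul_assoc]
  have hmain : exp (c • A) * exp (c • B) = exp ((-c) • B) * exp (c • A) :=
    exp_semiconj_left hsemi
  have hcomm : Commute ((-2*c) • B) (c • B) :=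
    ((Commute.refl B).smul_right c).smul_left (-2*c)
  have hsplit : exp ((-c) • B) = exp ((-2*c) • B) * exp (c • B) := by
    rw [← Matrix.exp_add_of_commute _ _ hcomm, ← add_smul]
    congr 1
    ring
  have hcasB : B ^ 2 + C ^ 2 + A ^ 2
      = (((2*(k:ℂ)+1)/2) * ((2*(k:ℂ)+1)/2 + 1)) • (1 : Matrix (Fin (2*k+2)) (Fin (2*k+2)) ℂ) := by
    rw [← hcas]; abel
  have h2pi : exp ((-2*c) • B) = -1 := by
    have hval : (-2*c) = 2*(Real.pi:ℂ)*Complex.I := by rw [hc]; ring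
    rw [hval]
    exact exp_two_pi_smul_eq_neg_one hB hC hA h2 h3 h1 hcasB
  calc exp (c • A) * exp (c • B)
      = exp ((-c) • B) * exp (c • A) := hmain
    _ = exp ((-2*c) • B) * exp (c • B) * exp (c • A) := by rw [← hsplit]
    _ = -(exp (c • B) * exp (c • A)) := by
        rw [h2pi, neg_one_mul, neg_mul]

/-- For half-odd-integer spin `S = (2k+1)/2`, the standard spin operators
`S1, S2, S3` on `ℂ^(2S+1)` (Hermitian, su(2) commutation relations, Casimir `S(S+1)`)
satisfy `Vj Vk = - Vk Vj` for `j ≠ k`, where `Vj = exp (-iπ Sj)`. -/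
theorem pi_rotations_anticommute (k : ℕ)
    (S1 S2 S3 : Matrix (Fin (2*k+2)) (Fin (2*k+2)) ℂ)
    (h1 : S1.IsHermitian) (h2 : S2.IsHermitian) (h3 : S3.IsHermitian)
    (hc1 : S1 * S2 - S2 * S1 = Complex.I • S3)
    (hc2 : S2 * S3 - S3 * S2 = Complex.I • S1)
    (hc3 : S3 * S1 - S1 * S3 = Complex.I • S2)
    (hcas : S1 ^ 2 + S2 ^ 2 + S3 ^ 2
      = (((2*(k:ℂ)+1)/2) * ((2*(k:ℂ)+1)/2 + 1)) • (1 : Matrix (Fin (2*k+2)) (Fin (2*k+2)) ℂ)) :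
    ∀ T U : Matrix (Fin (2*k+2)) (Fin (2*k+2)) ℂ,
      ((T = S1 ∧ U = S2) ∨ (T = S2 ∧ U = S3) ∨ (T = S3 ∧ U = S1)) →
      (NormedSpace.exp ((-(Real.pi : ℂ) * Complex.I) • T)) *
        (NormedSpace.exp ((-(Real.pi : ℂ) * Complex.I) • U)) =
      -((NormedSpace.exp ((-(Real.pi : ℂ) * Complex.I) • U)) *
        (NormedSpace.exp ((-(Real.pi : ℂ) * Complex.I) • T))) := by
  intro T U hTU
  rcases hTU with ⟨rfl, rfl⟩ | ⟨rfl, rfl⟩ | ⟨rfl, rfl⟩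
  · exact key_anticommute h1 h2 h3 hc1 hc2 hc3 hcas
  · refine key_anticommute h2 h3 h1 hc2 hc3 hc1 ?_
    rw [← hcas]; abel
  · refine key_anticommute h3 h1 h2 hc3 hc1 hc2 ?_
    rw [← hcas]; abel
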